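/- Let G be a group, and let X be a topological space with finitely many connected components, with component set X₀ and component map i_X : X → X₀. Let τ : X^G → X^G be a cellular automaton with finite memory set M and continuous local defining map f : X^M → X. Define τ₀ : X₀^G → X₀^G as the cellular automaton with local defining map f₀ : X₀^M → X₀ induced on connected components. Then i_{X^G} ∘ τ = τ₀ ∘ i_{X^G}, where i_{X^G} : X^G → X₀^G applies i_X coordinatewise. Moreover, if σ is another cellular automaton over X with continuous local defining map, then (σ ∘ τ)₀ = σ₀ ∘ τ₀. -/
import Mathlib


open ConnectedComponents

/-- If a continuous map `f : (M → X) → X` is applied to two coordinatewise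
component-equal configurations, the outputs lie in the same connected component. -/
lemma mk_comp_const_on_components {M X : Type*} [TopologicalSpace X]
    (f : (M → X) → X) (hf : Continuous f) (x y : M → X)
    (h : ∀ m, ConnectedComponents.mk (x m) = ConnectedComponents.mk (y m)) :
    ConnectedComponents.mk (f x) = ConnectedComponents.mk (f y) := by
  have hx : ∀ m, x m ∈ connectedComponent (y m) := fun m =>
    connectedComponent_eq_iff_mem.1 (ConnectedComponents.coe_eq_coe.1 (h m))
  have hpi : IsPreconnected (Set.pi Set.univ fun m => connectedComponent (y m)) :=
    isPreconnected_univ_pi fun m => isPreconnected_connectedComponent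
  have himg : IsPreconnected (f '' Set.pi Set.univ fun m => connectedComponent (y m)) :=
    hpi.image f hf.continuousOn
  have hfy : f y ∈ f '' Set.pi Set.univ fun m => connectedComponent (y m) :=
    ⟨y, fun m _ => mem_connectedComponent, rfl⟩
  have hfx : f x ∈ f '' Set.pi Set.univ fun m => connectedComponent (y m) :=
    ⟨x, fun m _ => hx m, rfl⟩
  have hsub := himg.subset_connectedComponent hfy
  exact ConnectedComponents.coe_eq_coe.2 (connectedComponent_eq_iff_mem.2 (hsub hfx))

/-- Let `X` be a topological space with finitely many connected components and let
`τ, σ : X^G → X^G` be cellular automata with finite memory set `M` and continuous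
local defining maps `f, g : X^M → X`. Then the induced local maps
`f₀, g₀ : X₀^M → X₀` on connected components exist (well-definedness), and the
induced cellular automata `τ₀, σ₀ : X₀^G → X₀^G` satisfy
`i_{X^G} ∘ τ = τ₀ ∘ i_{X^G}` and `(σ ∘ τ)₀ = σ₀ ∘ τ₀` (functoriality). -/
theorem induced_cellularAutomaton_on_connectedComponents
    (G X : Type*) [Group G] [TopologicalSpace X] [Finite (ConnectedComponents X)]
    (M : Finset G) (f g : (M → X) → X) (hf : Continuous f) (hg : Continuous g)
    (τ σ : (G → X) → (G → X))
    (hτ : ∀ (c : G → X) (a : G), τ c a = f fun m => c (a * (m : G)))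
    (hσ : ∀ (c : G → X) (a : G), σ c a = g fun m => c (a * (m : G))) :
    ∃ (f₀ g₀ : (M → ConnectedComponents X) → ConnectedComponents X),
      (∀ x : M → X, f₀ (fun m => ConnectedComponents.mk (x m)) = ConnectedComponents.mk (f x)) ∧
      (∀ x : M → X, g₀ (fun m => ConnectedComponents.mk (x m)) = ConnectedComponents.mk (g x)) ∧
      ∀ (τ₀ σ₀ : (G → ConnectedComponents X) → (G → ConnectedComponents X)),
        (∀ (c : G → ConnectedComponents X) (a : G), τ₀ c a = f₀ fun m => c (a * (m : G))) →
        (∀ (c : G → ConnectedComponents X) (a : G), σ₀ c a = g₀ fun m => c (a * (m : G))) →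
        (∀ c : G → X,
            τ₀ (fun h => ConnectedComponents.mk (c h)) = fun h => ConnectedComponents.mk (τ c h)) ∧
        (∀ c : G → X,
            σ₀ (τ₀ (fun h => ConnectedComponents.mk (c h)))
              = fun h => ConnectedComponents.mk (σ (τ c) h)) := by
  classical
  have hsurj := (ConnectedComponents.surjective_coe : Function.Surjective (ConnectedComponents.mk : X → ConnectedComponents X))
  -- choose representatives
  set rep : ConnectedComponents X → X := fun c => (hsurj c).choose with hrep
  have hrep_spec : ∀ c, ConnectedComponents.mk (rep c) = c := fun c => (hsurj c).choose_spec
  refine ⟨fun c => ConnectedComponents.mk (f fun m => rep (c m)),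
          fun c => ConnectedComponents.mk (g fun m => rep (c m)), ?_, ?_, ?_⟩
  · intro x
    exact mk_comp_const_on_components f hf _ x (fun m => hrep_spec _)
  · intro x
    exact mk_comp_const_on_components g hg _ x (fun m => hrep_spec _)
  · intro τ₀ σ₀ hτ₀ hσ₀
    have key : ∀ c : G → X,
        τ₀ (fun h => ConnectedComponents.mk (c h)) = fun h => ConnectedComponents.mk (τ c h) := by
      intro c
      funext a
      rw [hτ₀, hτ]
      exact mk_comp_const_on_components f hf _ (fun m => c (a * (m : G)))
        (fun m => hrep_spec _)
    refine ⟨key, ?_⟩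
    intro c
    rw [key c]
    funext a
    rw [hσ₀, hσ]
    exact mk_comp_const_on_components g hg _ (fun m => τ c (a * (m : G)))
      (fun m => hrep_spec _)
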